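/- For the Tukey depth of the empirical measure of n points in ℝ^d and α ∈ (0,1], the level set S_α equals the intersection of all closed balls containing at least ⌊n(1-α)+1⌋ = ⌊n(1-α)⌋ + 1 of the data points (counted with multiplicity). -/

import Mathlib

set_option maxHeartbeats 1000000


open MeasureTheory
open scoped ENNReal RealInnerProductSpace

/-- Tukey halfspace depth of `x` with respect to `μ`. -/
noncomputable def tukeyDepth {d : ℕ} (μ : Measure (EuclideanSpace ℝ (Fin d)))
    (x : EuclideanSpace ℝ (Fin d)) : ℝ≥0∞ :=
  sInf {r : ℝ≥0∞ | ∃ (u : EuclideanSpace ℝ (Fin d)) (c : ℝ),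
    u ≠ 0 ∧ c ≤ ⟪u, x⟫ ∧ r = μ {y | c ≤ ⟪u, y⟫}}

/-- For the empirical measure of `n` data points and `α ∈ (0,1]`, the Tukey depth level set
`S_α` equals the intersection of all closed balls containing at least `⌊n(1-α)⌋ + 1` of the
data points (with multiplicity). -/
theorem empirical_level_set_eq_inter_balls (d n : ℕ) (hn : 0 < n)
    (x : Fin n → EuclideanSpace ℝ (Fin d))
    (μ : Measure (EuclideanSpace ℝ (Fin d)))
    (hμ : μ = (n : ℝ≥0∞)⁻¹ • ∑ i, Measure.dirac (x i))
    (α : ℝ) (hα : α ∈ Set.Ioc (0 : ℝ) 1) :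
    {y | ENNReal.ofReal α ≤ tukeyDepth μ y} =
      ⋂₀ {B : Set (EuclideanSpace ℝ (Fin d)) |
        ∃ (z : EuclideanSpace ℝ (Fin d)) (ρ : ℝ), 0 ≤ ρ ∧ B = Metric.closedBall z ρ ∧
          ⌊(n : ℝ) * (1 - α)⌋₊ + 1 ≤ {i : Fin n | x i ∈ B}.ncard} := by
  classical
  obtain ⟨hα0, hα1⟩ := hα
  have hn0 : (0:ℝ) < n := Nat.cast_pos.mpr hn
  set k := ⌊(n : ℝ) * (1 - α)⌋₊ with hk
  have hcount : ∀ S : Set (EuclideanSpace ℝ (Fin d)),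
      μ S = (n:ℝ≥0∞)⁻¹ * ((Finset.univ.filter fun i => x i ∈ S).card : ℝ≥0∞) := by
    intro S
    rw [hμ, Measure.smul_apply, smul_eq_mul, Measure.finset_sum_apply]
    congr 1
    simp only [Measure.dirac_apply, Set.indicator_apply, Pi.one_apply]
    rw [Finset.sum_boole]
  have hcmp : ∀ (m : ℕ), (ENNReal.ofReal α ≤ (n:ℝ≥0∞)⁻¹ * m) ↔ (n:ℝ) * α ≤ m := by
    intro m
    rw [← ENNReal.div_eq_inv_mul,
      ENNReal.le_div_iff_mul_le (Or.inl (by exact_mod_cast hn.ne'))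
        (Or.inl (ENNReal.natCast_ne_top n)),
      ← ENNReal.ofReal_natCast n, ← ENNReal.ofReal_mul hα0.le, ← ENNReal.ofReal_natCast m,
      ENNReal.ofReal_le_ofReal_iff (Nat.cast_nonneg m), mul_comm]
  have hncard : ∀ S : Set (EuclideanSpace ℝ (Fin d)),
      {i : Fin n | x i ∈ S}.ncard = (Finset.univ.filter fun i => x i ∈ S).card := by
    intro S
    rw [Set.ncard_eq_toFinset_card']
    congr 1
    ext i; simp
  ext y
  simp only [Set.mem_setOf_eq, Set.mem_sInter]
  constructor
  · -- depth ≥ α implies y in every fat ball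
    rintro hy B ⟨z, ρ, hρ, rfl, hB⟩
    by_contra hyB
    rw [Metric.mem_closedBall, not_le, dist_eq_norm] at hyB
    set u : EuclideanSpace ℝ (Fin d) := y - z with hu
    have hun : 0 < ‖u‖ := lt_of_le_of_lt hρ hyB
    have hune : u ≠ 0 := by
      intro h0; rw [h0, norm_zero] at hun; exact lt_irrefl 0 hun
    set c : ℝ := ⟪u, z⟫ + (‖u‖ * ρ + ‖u‖ ^ 2) / 2 with hc
    have hyz : ⟪u, y⟫ = ⟪u, z⟫ + ‖u‖ ^ 2 := by
      have h1 : ⟪u, y - z⟫ = ‖u‖ ^ 2 := by rw [← hu]; exact real_inner_self_eq_norm_sq u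
      rw [inner_sub_right] at h1; linarith
    have hcy : c ≤ ⟪u, y⟫ := by rw [hyz, hc]; nlinarith
    -- depth bound at this halfspace
    have hdepth : ENNReal.ofReal α ≤ μ {w | c ≤ ⟪u, w⟫} :=
      le_trans hy (sInf_le ⟨u, c, hune, hcy, rfl⟩)
    rw [hcount, hcmp] at hdepth
    -- ball points are outside the halfspace
    have hout : ∀ i, x i ∈ Metric.closedBall z ρ → ⟪u, x i⟫ < c := by
      intro i hi
      rw [Metric.mem_closedBall, dist_eq_norm] at hi
      have h1 : ⟪u, x i - z⟫ ≤ ‖u‖ * ρ :=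
        le_trans (real_inner_le_norm u _) (by nlinarith [norm_nonneg (x i - z)])
      rw [inner_sub_right] at h1
      rw [hc]; nlinarith
    have hdisj : Disjoint (Finset.univ.filter fun i => x i ∈ {w | c ≤ ⟪u, w⟫})
        (Finset.univ.filter fun i => x i ∈ Metric.closedBall z ρ) := by
      rw [Finset.disjoint_left]
      intro i hi1 hi2
      simp only [Finset.mem_filter, Set.mem_setOf_eq] at hi1 hi2
      exact absurd hi1.2 (not_le.mpr (hout i hi2.2))
    have hsum : (Finset.univ.filter fun i => x i ∈ {w | c ≤ ⟪u, w⟫}).card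
        + (Finset.univ.filter fun i => x i ∈ Metric.closedBall z ρ).card ≤ n := by
      rw [← Finset.card_union_of_disjoint hdisj]
      calc ((Finset.univ.filter fun i => x i ∈ {w | c ≤ ⟪u, w⟫}) ∪ (Finset.univ.filter fun i => x i ∈ Metric.closedBall z ρ)).card ≤ (Finset.univ : Finset (Fin n)).card := Finset.card_le_univ _
        _ = n := by simp
    rw [hncard] at hB
    have h4 : (n:ℝ) * (1 - α) < (k:ℝ) + 1 := by
      exact_mod_cast Nat.lt_floor_add_one ((n : ℝ) * (1 - α))
    have hsum' : ((Finset.univ.filter fun i => x i ∈ {w | c ≤ ⟪u, w⟫}).card : ℝ)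
        + ((Finset.univ.filter fun i => x i ∈ Metric.closedBall z ρ).card : ℝ) ≤ n := by
      exact_mod_cast hsum
    have hB' : (k:ℝ) + 1 ≤ ((Finset.univ.filter fun i => x i ∈ Metric.closedBall z ρ).card : ℝ) := by
      exact_mod_cast hB
    nlinarith
  · -- y in every fat ball implies depth ≥ α
    intro hy
    refine le_sInf ?_
    rintro r ⟨u, c, huc, hcy, rfl⟩
    rw [hcount, hcmp]
    by_contra hlt
    push_neg at hlt
    set F := Finset.univ.filter (fun i => ¬ (x i ∈ {w : EuclideanSpace ℝ (Fin d) | c ≤ ⟪u, w⟫}))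
      with hF
    have hsplit : (Finset.univ.filter fun i => x i ∈ {w | c ≤ ⟪u, w⟫}).card + F.card = n := by
      rw [hF]
      rw [Finset.card_filter_add_card_filter_not]
      simp
    have hkfl : (k:ℝ) ≤ (n:ℝ) * (1 - α) := Nat.floor_le (by nlinarith)
    have hkF : k + 1 ≤ F.card := by
      have h1 : ((Finset.univ.filter fun i => x i ∈ {w | c ≤ ⟪u, w⟫}).card : ℝ) + F.card = n := by
        exact_mod_cast hsplit
      have h2 : (k:ℝ) < (F.card : ℝ) := by nlinarith
      exact_mod_cast Nat.cast_lt.mp h2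
    have hFne : F.Nonempty := Finset.card_pos.mp (by omega)
    -- geometry: build a big ball containing the points of F but not y
    have hun : 0 < ‖u‖ := norm_pos_iff.mpr huc
    set v : EuclideanSpace ℝ (Fin d) := ‖u‖⁻¹ • u with hv
    have hvn : ‖v‖ = 1 := by
      rw [hv, norm_smul, norm_inv, norm_norm, inv_mul_cancel₀ hun.ne']
    set c' : ℝ := ‖u‖⁻¹ * c with hc'
    have hpts : ∀ i ∈ F, ⟪v, x i⟫ < c' := by
      intro i hi
      rw [hF, Finset.mem_filter] at hi
      have h1 : ⟪u, x i⟫ < c := not_le.mp hi.2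
      rw [hv, real_inner_smul_left, hc']
      exact (mul_lt_mul_iff_right₀ (inv_pos.mpr hun)).mpr h1
    have hyc : c' ≤ ⟪v, y⟫ := by
      rw [hv, real_inner_smul_left, hc']
      exact (mul_le_mul_iff_right₀ (inv_pos.mpr hun)).mpr hcy
    set ε : ℝ := c' - F.sup' hFne (fun i => ⟪v, x i⟫) with hε
    have hε0 : 0 < ε := by
      rw [hε, sub_pos]
      exact (Finset.sup'_lt_iff hFne).mpr hpts
    have hptsε : ∀ i ∈ F, ⟪v, x i⟫ ≤ c' - ε := by
      intro i hi
      have := Finset.le_sup' (fun i => ⟪v, x i⟫) hi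
      rw [hε]; linarith
    set M : ℝ := F.sup' hFne (fun i => ‖x i‖) with hM
    have hMle : ∀ i ∈ F, ‖x i‖ ≤ M := fun i hi => Finset.le_sup' (fun i => ‖x i‖) hi
    set t : ℝ := 1 + 2 * |c'| + M ^ 2 / (2 * ε) with ht
    have hdiv : M ^ 2 / (2 * ε) * (2 * ε) = M ^ 2 := div_mul_cancel₀ _ (by positivity)
    have hdivnn : 0 ≤ M ^ 2 / (2 * ε) := by positivity
    have ht0 : 0 < t := by rw [ht]; nlinarith [abs_nonneg c']
    have htc : 0 < t + 2 * c' := by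
      rw [ht]; nlinarith [abs_nonneg c', neg_abs_le c']
    have htM : M ^ 2 < 2 * t * ε := by rw [ht]; nlinarith [abs_nonneg c']
    set z : EuclideanSpace ℝ (Fin d) := (-t) • v with hz
    set ρ : ℝ := Real.sqrt (M ^ 2 + 2 * t * (c' - ε) + t ^ 2) with hρ
    have key : ∀ p : EuclideanSpace ℝ (Fin d),
        ‖p - z‖ ^ 2 = ‖p‖ ^ 2 + 2 * t * ⟪v, p⟫ + t ^ 2 := by
      intro p
      rw [norm_sub_sq_real, hz, inner_smul_right, norm_smul, real_inner_comm]
      simp [hvn]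
      ring
    have hballmem : ∀ i ∈ F, x i ∈ Metric.closedBall z ρ := by
      intro i hi
      rw [Metric.mem_closedBall, dist_eq_norm]
      calc ‖x i - z‖ = Real.sqrt (‖x i - z‖ ^ 2) := (Real.sqrt_sq (norm_nonneg _)).symm
        _ ≤ ρ := by
            rw [hρ]
            apply Real.sqrt_le_sqrt
            rw [key]
            nlinarith [hMle i hi, hptsε i hi, norm_nonneg (x i)]
    have hynot : y ∉ Metric.closedBall z ρ := by
      rw [Metric.mem_closedBall, not_le, dist_eq_norm]
      have hpos : 0 < ‖y - z‖ := by
        have h1 : 0 < ‖y - z‖ ^ 2 := by rw [key]; nlinarith [norm_nonneg y]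
        nlinarith [norm_nonneg (y - z)]
      rw [hρ]
      rw [Real.sqrt_lt' hpos, key]
      nlinarith [norm_nonneg y]
    have hfat : k + 1 ≤ {i : Fin n | x i ∈ Metric.closedBall z ρ}.ncard := by
      rw [hncard]
      refine le_trans hkF (Finset.card_le_card ?_)
      intro i hi
      rw [Finset.mem_filter]
      exact ⟨Finset.mem_univ i, hballmem i (by exact hi)⟩
    exact hynot (hy _ ⟨z, ρ, Real.sqrt_nonneg _, rfl, hfat⟩)
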